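/- Let I be a finite nonempty index set and let q, t : I → ℝ be probability mass functions (q i ≥ 0, t i ≥ 0 for all i, and Σ_{i∈I} q i = Σ_{i∈I} t i = 1). Define Sp(β) = Σ_{i∈I} max(0, β·q i − t i) for β ∈ ℝ, and let β* be the unique real number with Sp(β*) = 1. Then β* = 1 if and only if q i · t i = 0 for all i ∈ I (i.e., the supports of q and t do not overlap). -/
import Mathlib


open Real Finset

lemma beta_unique_aux {I : Type*} [Fintype I] (q t : I → ℝ)
    (hq : ∀ i, 0 ≤ q i) (ht : ∀ i, 0 ≤ t i) {a b : ℝ} (hab : a < b)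
    (ha : ∑ i, max 0 (a * q i - t i) = 1)
    (hb : ∑ i, max 0 (b * q i - t i) = 1) : False := by
  have hpos : ∃ i, 0 < max 0 (a * q i - t i) := by
    by_contra hc
    push_neg at hc
    have : (∑ i, max 0 (a * q i - t i)) ≤ 0 :=
      Finset.sum_nonpos (fun i _ => hc i)
    linarith
  obtain ⟨i, hi⟩ := hpos
  have hlt : 0 < a * q i - t i := by
    rcases le_or_gt (a * q i - t i) 0 with h | h
    · rw [max_eq_left h] at hi; exact absurd hi (lt_irrefl 0)
    · exact h
  have hqi : 0 < q i := by
    rcases (hq i).lt_or_eq with h | h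
    · exact h
    · rw [← h] at hlt; simp at hlt; linarith [ht i]
  have key : ∀ j, max 0 (a * q j - t j) ≤ max 0 (b * q j - t j) := by
    intro j
    apply max_le_max le_rfl
    nlinarith [mul_nonneg (sub_pos.mpr hab).le (hq j)]
  have keyi : max 0 (a * q i - t i) < max 0 (b * q i - t i) := by
    have h1 : a * q i - t i < b * q i - t i := by nlinarith
    rw [max_eq_right hlt.le, max_eq_right (by linarith)]
    exact h1
  have : (∑ j, max 0 (a * q j - t j)) < ∑ j, max 0 (b * q j - t j) :=
    Finset.sum_lt_sum (fun j _ => key j) ⟨i, Finset.mem_univ i, keyi⟩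
  linarith

/-- Characterization of `β* = 1` in Theorem 1: for `β*` the unique real with
`Sp(β*) = Σ max(0, β*·q i − t i) = 1`, one has `β* = 1` iff `q i · t i = 0` for
all `i`, i.e. the supports of `q` and `t` are disjoint. -/
theorem beta_eq_one_iff {I : Type*} [Fintype I] [Nonempty I]
    (q t : I → ℝ) (hq : ∀ i, 0 ≤ q i) (ht : ∀ i, 0 ≤ t i)
    (hqs : ∑ i, q i = 1) (hts : ∑ i, t i = 1)
    (Sp : ℝ → ℝ) (hSp : ∀ β : ℝ, Sp β = ∑ i, max 0 (β * q i - t i))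
    (βstar : ℝ) (hβ : Sp βstar = 1) :
    βstar = 1 ↔ ∀ i, q i * t i = 0 := by
  constructor
  · intro hb1
    subst hb1
    rw [hSp] at hβ
    have hle : ∀ i ∈ Finset.univ, max 0 (1 * q i - t i) ≤ q i := by
      intro i _
      exact max_le (hq i) (by linarith [ht i])
    have heq : ∀ i ∈ Finset.univ, max 0 (1 * q i - t i) = q i := by
      rw [← Finset.sum_eq_sum_iff_of_le hle]
      rw [hβ, hqs]
    intro i
    by_contra hne
    have hq' : 0 < q i := (hq i).lt_of_ne (fun h => hne (by rw [← h]; ring))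
    have ht' : 0 < t i := (ht i).lt_of_ne (fun h => hne (by rw [← h]; ring))
    have : max 0 (1 * q i - t i) < q i := max_lt hq' (by linarith)
    rw [heq i (Finset.mem_univ i)] at this
    exact lt_irrefl _ this
  · intro h
    have h1 : Sp 1 = 1 := by
      rw [hSp]
      have key : ∀ i, max 0 (1 * q i - t i) = q i := by
        intro i
        rcases mul_eq_zero.mp (h i) with h0 | h0
        · rw [h0, max_eq_left (by linarith [ht i])]
        · rw [h0, max_eq_right (by linarith [hq i])]; ring
      rw [Finset.sum_congr rfl (fun i _ => key i), hqs]
    rw [hSp] at hβ h1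
    rcases lt_trichotomy βstar 1 with hlt | heq | hgt
    · exact absurd (beta_unique_aux q t hq ht hlt hβ h1) id
    · exact heq
    · exact absurd (beta_unique_aux q t hq ht hgt h1 hβ) id
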